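/- arXiv:1301.2892 — 2 statements merged into one kernel-verified Lean document; each statement's English description precedes it below -/
import Mathlib

section
/- For m ≥ 1 and n ≥ 2, no 'type II' endomorphism of G = ℤ^m × F_n is injective and none is surjective: if Ψ(a,u) = (aQ + ūP, w^{a·lᵀ + ū·hᵀ}) for some w ∈ F_n, l ∈ ℤ^m, h ∈ ℤ^n, and integer matrices Q (m×m) and P (n×m), then Ψ is neither injective nor surjective. -/
open Matrix

/-- The abelianization vector (vector of exponent sums of the generators)
of an element of the free group `F_n`. -/
def abVec {n : ℕ} (u : FreeGroup (Fin n)) : Fin n → ℤ :=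
  Multiplicative.toAdd ((FreeGroup.lift fun i => Multiplicative.ofAdd (Pi.single i (1 : ℤ))) u)

/-- The free-abelian times free group `G = ℤ^m × F_n`. -/
abbrev GFab (m n : ℕ) := Multiplicative (Fin m → ℤ) × FreeGroup (Fin n)

lemma abVec_mul {n : ℕ} (u v : FreeGroup (Fin n)) :
    abVec (u * v) = abVec u + abVec v := by
  simp [abVec]

lemma free_noncomm {n : ℕ} (hn : 2 ≤ n) :
    FreeGroup.of (⟨0, by omega⟩ : Fin n) * FreeGroup.of ⟨1, by omega⟩
      ≠ FreeGroup.of ⟨1, by omega⟩ * FreeGroup.of ⟨0, by omega⟩ := by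
  intro heq
  let f : Fin n → Equiv.Perm (Fin 3) := fun i =>
    if i = ⟨0, by omega⟩ then Equiv.swap 0 1
    else if i = ⟨1, by omega⟩ then Equiv.swap 1 2 else 1
  have hf0 : f ⟨0, by omega⟩ = Equiv.swap 0 1 := if_pos rfl
  have hf1 : f ⟨1, by omega⟩ = Equiv.swap 1 2 := by
    simp [f, Fin.ext_iff]
  have := congrArg (FreeGroup.lift f) heq
  simp only [_root_.map_mul, FreeGroup.lift_apply_of, hf0, hf1] at this
  exact absurd this (by decide)

/-- No type II endomorphism of `ℤ^m × F_n` (m ≥ 1, n ≥ 2) is injective, and none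
is surjective. -/
theorem typeII_not_injective_not_surjective (m n : ℕ) (hm : 1 ≤ m) (hn : 2 ≤ n)
    (w : FreeGroup (Fin n)) (l : Fin m → ℤ) (h : Fin n → ℤ)
    (Q : Matrix (Fin m) (Fin m) ℤ) (P : Matrix (Fin n) (Fin m) ℤ)
    (Ψ : GFab m n →* GFab m n)
    (hΨ : ∀ (a : Fin m → ℤ) (u : FreeGroup (Fin n)),
      Ψ (Multiplicative.ofAdd a, u)
        = (Multiplicative.ofAdd (a ᵥ* Q + abVec u ᵥ* P),
            w ^ (a ⬝ᵥ l + abVec u ⬝ᵥ h))) :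
    ¬ Function.Injective Ψ ∧ ¬ Function.Surjective Ψ := by
  set x0 : FreeGroup (Fin n) := FreeGroup.of ⟨0, by omega⟩
  set x1 : FreeGroup (Fin n) := FreeGroup.of ⟨1, by omega⟩
  have hne : x0 * x1 ≠ x1 * x0 := free_noncomm hn
  constructor
  · intro hinj
    have hab : abVec (x0 * x1) = abVec (x1 * x0) := by
      rw [abVec_mul, abVec_mul, add_comm]
    have key : Ψ (Multiplicative.ofAdd 0, x0 * x1) = Ψ (Multiplicative.ofAdd 0, x1 * x0) := by
      rw [hΨ, hΨ, hab]
    have := hinj key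
    exact hne (congrArg Prod.snd this)
  · intro hsurj
    have pow : ∀ v : FreeGroup (Fin n), ∃ k : ℤ, v = w ^ k := by
      intro v
      obtain ⟨⟨a, u⟩, hau⟩ := hsurj (1, v)
      have := hΨ (Multiplicative.toAdd a) u
      rw [ofAdd_toAdd] at this
      rw [this] at hau
      exact ⟨_, (congrArg Prod.snd hau).symm⟩
    obtain ⟨k0, hk0⟩ := pow x0
    obtain ⟨k1, hk1⟩ := pow x1
    apply hne
    rw [hk0, hk1, ← _root_.zpow_add, ← _root_.zpow_add, add_comm]
end

section
/- Let a ∈ ℤ^m and u ∈ ℤ^n be nonzero row vectors, let b ∈ ℤ^m, and set α = gcd of the entries of a and μ = gcd of the entries of u. Then there exist an m×m integer matrix Q with det(Q) ≠ 0 and an n×m integer matrix P with aQ + uP = b if and only if there exist x, y ∈ ℤ^m with x ≠ 0 and αx + μy = b. -/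
open Matrix

/-- Bezout for Finset.gcd over ℤ. -/
lemma finset_gcd_bezout {ι : Type*} [DecidableEq ι] (s : Finset ι) (f : ι → ℤ) :
    ∃ c : ι → ℤ, ∑ i ∈ s, c i * f i = s.gcd f := by
  induction s using Finset.induction_on with
  | empty => exact ⟨0, by simp⟩
  | insert a s hnotmem ih =>
    obtain ⟨c, hc⟩ := ih
    have hg : (insert a s).gcd f = GCDMonoid.gcd (f a) (s.gcd f) := Finset.gcd_insert
    have hb : (Int.gcd (f a) (s.gcd f) : ℤ) =
        f a * Int.gcdA (f a) (s.gcd f) + (s.gcd f) * Int.gcdB (f a) (s.gcd f) :=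
      Int.gcd_eq_gcd_ab _ _
    refine ⟨fun i => if i = a then Int.gcdA (f a) (s.gcd f)
      else Int.gcdB (f a) (s.gcd f) * c i, ?_⟩
    rw [Finset.sum_insert hnotmem, hg, ← Int.coe_gcd, hb]
    rw [Finset.sum_congr rfl (fun i hi => by
      simp only []
      rw [if_neg (fun h : i = a => hnotmem (h ▸ hi))])]
    have : ∑ i ∈ s, Int.gcdB (f a) (s.gcd f) * c i * f i
        = Int.gcdB (f a) (s.gcd f) * ∑ i ∈ s, c i * f i := by
      rw [Finset.mul_sum]; exact Finset.sum_congr rfl (fun i _ => by ring)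
    rw [this, hc]
    simp only [if_true]
    ring

lemma vecMul_smul_one {m : Type*} [Fintype m] [DecidableEq m] (c : ℤ) (a : m → ℤ) :
    a ᵥ* (c • (1 : Matrix m m ℤ)) = c • a := by
  ext j
  simp [vecMul, dotProduct, Matrix.one_apply, mul_ite, mul_comm]

lemma vecMul_col_mul_row {m : Type*} [Fintype m] (a u v : m → ℤ) :
    a ᵥ* (Matrix.replicateCol Unit u * Matrix.replicateRow Unit v) = (a ⬝ᵥ u) • v := by
  rw [← Matrix.vecMul_vecMul]
  ext j
  simp [vecMul, dotProduct, Finset.sum_mul]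

lemma det_ne_zero_aux {K : Type*} [Field K] {m : Type*} [Fintype m] [DecidableEq m]
    (c : K) (hc : c ≠ 0) (u v : m → K) (hcv : c + v ⬝ᵥ u ≠ 0) :
    (c • (1 : Matrix m m K) + Matrix.replicateCol Unit u * Matrix.replicateRow Unit v).det ≠ 0 := by
  have h1 : c • (1 : Matrix m m K) + Matrix.replicateCol Unit u * Matrix.replicateRow Unit v
      = c • ((1 : Matrix m m K) + Matrix.replicateCol Unit (c⁻¹ • u) * Matrix.replicateRow Unit v) := by
    rw [smul_add]
    congr 1
    rw [Matrix.replicateCol_smul, Matrix.smul_mul, smul_smul, mul_inv_cancel₀ hc, one_smul]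
  rw [h1, Matrix.det_smul, Matrix.det_one_add_replicateCol_mul_replicateRow]
  refine mul_ne_zero (pow_ne_zero _ hc) ?_
  have : v ⬝ᵥ c⁻¹ • u = c⁻¹ * (v ⬝ᵥ u) := by
    rw [dotProduct_smul]; simp [smul_eq_mul]
  rw [this]
  intro h
  apply hcv
  have := congrArg (c * ·) h
  simp only [mul_add, mul_one, mul_zero] at this
  rw [← mul_assoc, mul_inv_cancel₀ hc, one_mul] at this
  exact this

lemma exists_d' (m : ℕ) (a x : Fin m → ℤ) (ha : a ≠ 0) (hx : x ≠ 0) :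
    ∃ d' : Fin m → ℤ, a ⬝ᵥ d' = Finset.univ.gcd a ∧ x ⬝ᵥ d' ≠ 0 := by
  classical
  set α := Finset.univ.gcd a with hαdef
  have hα : α ≠ 0 := by
    rw [hαdef, Ne, Finset.gcd_eq_zero_iff]
    intro h
    exact ha (funext fun i => h i (Finset.mem_univ i))
  obtain ⟨j0, hj0⟩ := Function.ne_iff.mp ha
  simp only [Pi.zero_apply] at hj0
  obtain ⟨c, hc⟩ := finset_gcd_bezout Finset.univ a
  have had : a ⬝ᵥ c = α := by
    rw [dotProduct, hαdef, ← hc]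
    exact Finset.sum_congr rfl fun i _ => mul_comm _ _
  by_cases hxd : x ⬝ᵥ c = 0
  · by_cases hprop : ∀ j, a j0 * x j = a j * x j0
    · exfalso
      have hx0 : x j0 ≠ 0 := by
        intro h0
        apply hx
        funext j
        have := hprop j
        rw [h0, mul_zero] at this
        exact (mul_eq_zero.mp this).resolve_left hj0
      have key : a j0 * (x ⬝ᵥ c) = x j0 * (a ⬝ᵥ c) := by
        rw [dotProduct, dotProduct, Finset.mul_sum, Finset.mul_sum]
        refine Finset.sum_congr rfl fun i _ => ?_
        linear_combination c i * hprop i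
      rw [hxd, had, mul_zero] at key
      exact hα ((mul_eq_zero.mp key.symm).resolve_left hx0)
    · push_neg at hprop
      obtain ⟨j, hj⟩ := hprop
      refine ⟨c + (Pi.single j (a j0) + Pi.single j0 (-(a j))), ?_, ?_⟩
      · rw [dotProduct_add, dotProduct_add, dotProduct_single, dotProduct_single, had]
        ring
      · rw [dotProduct_add, dotProduct_add, dotProduct_single, dotProduct_single, hxd]
        intro h
        apply hj
        linear_combination h
  · exact ⟨c, had, hxd⟩

lemma exists_Q (m : ℕ) (a x : Fin m → ℤ) (ha : a ≠ 0) (hx : x ≠ 0) :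
    ∃ Q : Matrix (Fin m) (Fin m) ℤ, Q.det ≠ 0 ∧ a ᵥ* Q = (Finset.univ.gcd a) • x := by
  classical
  set α := Finset.univ.gcd a with hαdef
  have hα : α ≠ 0 := by
    rw [hαdef, Ne, Finset.gcd_eq_zero_iff]
    intro h
    exact ha (funext fun i => h i (Finset.mem_univ i))
  obtain ⟨j0, hj0⟩ := Function.ne_iff.mp ha
  simp only [Pi.zero_apply] at hj0
  obtain ⟨d, had, hxd⟩ := exists_d' m a x ha hx
  set z : Fin m → ℤ := x - (a j0) • a with hzdef
  set Q : Matrix (Fin m) (Fin m) ℤ :=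
    (α * a j0) • (1 : Matrix (Fin m) (Fin m) ℤ) + Matrix.replicateCol Unit d * Matrix.replicateRow Unit z
    with hQdef
  refine ⟨Q, ?_, ?_⟩
  · -- determinant
    have hmap : (Int.castRingHom ℚ).mapMatrix Q
        = ((α * a j0 : ℤ) : ℚ) • (1 : Matrix (Fin m) (Fin m) ℚ)
          + Matrix.replicateCol Unit (fun i => (d i : ℚ)) * Matrix.replicateRow Unit (fun i => (z i : ℚ)) := by
      ext i k
      simp only [RingHom.mapMatrix_apply, Matrix.map_apply, hQdef, Matrix.add_apply,
        Matrix.smul_apply, Matrix.one_apply, Matrix.mul_apply, Matrix.replicateCol_apply,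
        Matrix.replicateRow_apply, smul_eq_mul, Finset.univ_unique, Finset.sum_singleton,
        eq_intCast, apply_ite (Int.cast : ℤ → ℚ)]
      split_ifs <;> push_cast <;> ring
    have hdetQ : (((Int.castRingHom ℚ).mapMatrix Q).det : ℚ) = ((Q.det : ℤ) : ℚ) := by
      rw [← RingHom.map_det]; rfl
    have hc : ((α * a j0 : ℤ) : ℚ) ≠ 0 := by
      exact_mod_cast mul_ne_zero hα hj0
    have hsum : ((α * a j0 : ℤ) : ℚ)
        + (fun i => (z i : ℚ)) ⬝ᵥ (fun i => (d i : ℚ)) = ((x ⬝ᵥ d : ℤ) : ℚ) := by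
      have hz : (z ⬝ᵥ d : ℤ) = x ⬝ᵥ d - a j0 * (a ⬝ᵥ d) := by
        rw [hzdef, sub_dotProduct, smul_dotProduct]; simp [smul_eq_mul]
      have : (fun i => (z i : ℚ)) ⬝ᵥ (fun i => (d i : ℚ)) = ((z ⬝ᵥ d : ℤ) : ℚ) := by
        rw [dotProduct, dotProduct]; push_cast; rfl
      rw [this, hz, had]
      push_cast
      ring
    have hdne : (((Int.castRingHom ℚ).mapMatrix Q).det : ℚ) ≠ 0 := by
      rw [hmap]
      refine det_ne_zero_aux _ hc _ _ ?_
      rw [hsum]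
      exact_mod_cast hxd
    intro h0
    rw [hdetQ] at hdne
    exact hdne (by exact_mod_cast h0)
  · rw [hQdef, Matrix.vecMul_add, vecMul_smul_one, vecMul_col_mul_row, had]
    ext j
    simp only [Pi.add_apply, Pi.smul_apply, smul_eq_mul, hzdef, Pi.sub_apply]
    ring


/-- For nonzero `a ∈ ℤ^m`, `u ∈ ℤ^n` and `b ∈ ℤ^m`, with `α = gcd(a)` and `μ = gcd(u)`:
there exist Q (m×m) with `det Q ≠ 0` and P (n×m) with `aQ + uP = b` iff the system
`αx + μy = b` has an integer solution with `x ≠ 0`. -/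
theorem matrix_eq_iff_gcd_system_mono (m n : ℕ) (a : Fin m → ℤ) (u : Fin n → ℤ)
    (ha : a ≠ 0) (hu : u ≠ 0) (b : Fin m → ℤ) :
    (∃ (Q : Matrix (Fin m) (Fin m) ℤ) (P : Matrix (Fin n) (Fin m) ℤ),
        Q.det ≠ 0 ∧ a ᵥ* Q + u ᵥ* P = b) ↔
    (∃ x y : Fin m → ℤ, x ≠ 0 ∧ (Finset.univ.gcd a) • x + (Finset.univ.gcd u) • y = b) := by
  classical
  have hα : Finset.univ.gcd a ≠ 0 := by
    rw [Ne, Finset.gcd_eq_zero_iff]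
    intro h
    exact ha (funext fun i => h i (Finset.mem_univ i))
  have hμ : Finset.univ.gcd u ≠ 0 := by
    rw [Ne, Finset.gcd_eq_zero_iff]
    intro h
    exact hu (funext fun i => h i (Finset.mem_univ i))
  constructor
  · rintro ⟨Q, P, hdet, heq⟩
    have hdvd1 : ∀ j, Finset.univ.gcd a ∣ (a ᵥ* Q) j := by
      intro j
      have : (a ᵥ* Q) j = ∑ i, a i * Q i j := by simp [vecMul, dotProduct]
      rw [this]
      exact Finset.dvd_sum fun i _ => (Finset.gcd_dvd (Finset.mem_univ i)).mul_right _
    have hdvd2 : ∀ j, Finset.univ.gcd u ∣ (u ᵥ* P) j := by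
      intro j
      have : (u ᵥ* P) j = ∑ i, u i * P i j := by simp [vecMul, dotProduct]
      rw [this]
      exact Finset.dvd_sum fun i _ => (Finset.gcd_dvd (Finset.mem_univ i)).mul_right _
    refine ⟨fun j => (a ᵥ* Q) j / Finset.univ.gcd a,
      fun j => (u ᵥ* P) j / Finset.univ.gcd u, ?_, ?_⟩
    · intro h0
      have hq0 : a ᵥ* Q = 0 := by
        funext j
        have := congrFun h0 j
        simp only [Pi.zero_apply] at this ⊢
        have hd := Int.ediv_mul_cancel (hdvd1 j) -- (aQ)j / α * α = (aQ)j ?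
        rw [this, zero_mul] at hd
        exact hd.symm
      exact ha (Matrix.eq_zero_of_vecMul_eq_zero hdet hq0)
    · funext j
      have h1 : Finset.univ.gcd a * ((a ᵥ* Q) j / Finset.univ.gcd a) = (a ᵥ* Q) j :=
        Int.mul_ediv_cancel' (hdvd1 j)
      have h2 : Finset.univ.gcd u * ((u ᵥ* P) j / Finset.univ.gcd u) = (u ᵥ* P) j :=
        Int.mul_ediv_cancel' (hdvd2 j)
      have := congrFun heq j
      simp only [Pi.add_apply, Pi.smul_apply, smul_eq_mul] at this ⊢
      rw [h1, h2]
      exact this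
  · rintro ⟨x, y, hx, hsys⟩
    obtain ⟨Q, hdet, hQ⟩ := exists_Q m a x ha hx
    obtain ⟨e, he⟩ := finset_gcd_bezout Finset.univ u
    refine ⟨Q, Matrix.of fun i j => e i * y j, hdet, ?_⟩
    have hP : u ᵥ* (Matrix.of fun i j => e i * y j) = (Finset.univ.gcd u) • y := by
      funext j
      simp only [vecMul, dotProduct, Matrix.of_apply, Pi.smul_apply, smul_eq_mul]
      rw [← he, Finset.sum_mul]
      exact Finset.sum_congr rfl fun i _ => by ring
    rw [hQ, hP]
    exact hsys
end
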